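/- Let δ > 0, S = Nδ with N ∈ ℕ*, let t ∈ π^δ, and let (P_{s,u})_{s≤u} and (Q_{s,u})_{s≤u ∈ π^δ} be families of linear operators on bounded measurable functions each satisfying the Chapman–Kolmogorov property, with P_{u,u} = Q_{u,u} = Id. Then for every m ∈ ℕ* the exact decomposition holds: P_{t,t+S} = Q_{t,t+S} + Σ_{i=1}^{m−1} I_i + R_m, where I_i = Σ over grid times t = t₀ < t₁ < ⋯ < t_i ≤ t+S in π^δ of (∏_{j=1}^{i} Q_{t_{j−1},t_j−δ}(P_{t_j−δ,t_j} − Q_{t_j−δ,t_j})) Q_{t_i,t+S}, and R_m = Σ over grid times t = t₀ < t₁ < ⋯ < t_m ≤ t+S in π^δ of (∏_{j=1}^{m} Q_{t_{j−1},t_j−δ}(P_{t_j−δ,t_j} − Q_{t_j−δ,t_j})) P_{t_m,t+S}. -/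

import Mathlib

open MeasureTheory

noncomputable section

abbrev Rd (d : ℕ) := Fin d → ℝ
abbrev Fn (d : ℕ) := Rd d → ℝ
abbrev Op (d : ℕ) := Module.End ℝ (Fn d)

def inGrid (δ t : ℝ) : Prop := ∃ k : ℕ, t = k * δ

open Classical in
/-- Strictly increasing selections `1 ≤ k₁ < ⋯ < k_i ≤ N` of grid indices. -/
noncomputable def gridSeq (i N : ℕ) : Finset (Fin i → Fin (N + 1)) :=
  Finset.univ.filter (fun k => StrictMono k ∧ ∀ j, 1 ≤ (k j : ℕ))

/-- times `t = t₀ < t₁ < ⋯ < t_i`, with `t_j = t + k_j δ`. -/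
def seqTimes {i N : ℕ} (k : Fin i → Fin (N + 1)) (t δ : ℝ) : Fin (i + 1) → ℝ :=
  fun j => Fin.cases t (fun j' => t + ((k j' : ℕ) : ℝ) * δ) j

/-- `Σ over t = t₀ < t₁ < ⋯ < t_i ≤ t + Nδ in π^δ of
(∏_{j=1}^{i} Q_{t_{j−1},t_j−δ} D_{t_j−δ}) tail_{t_i}`, where products are operator
compositions ordered along increasing times (the `j = 1` factor acting last). -/
noncomputable def lindSum (d : ℕ) (Q : ℝ → ℝ → Op d) (D : ℝ → Op d) (tail : ℝ → Op d)
    (t δ : ℝ) (i N : ℕ) : Op d :=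
  ∑ k ∈ gridSeq i N,
    (List.ofFn (fun j : Fin i =>
      Q (seqTimes k t δ j.castSucc) (seqTimes k t δ j.succ - δ) *
        D (seqTimes k t δ j.succ - δ))).prod *
      tail (seqTimes k t δ (Fin.last i))

namespace Stmt6Aux

/-- last selected grid index (0 if none). -/
def lastIdx {i N : ℕ} (k : Fin i → Fin (N + 1)) : ℕ :=
  Fin.cases (motive := fun _ => ℕ) 0 (fun j => (k j : ℕ)) (Fin.last i)

lemma lastIdx_zero {N : ℕ} (k : Fin 0 → Fin (N + 1)) : lastIdx k = 0 := rfl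

lemma lastIdx_succ {n N : ℕ} (k : Fin (n + 1) → Fin (N + 1)) :
    lastIdx k = (k (Fin.last n) : ℕ) := by
  rw [lastIdx, ← Fin.succ_last, Fin.cases_succ]

lemma lastIdx_le {i N : ℕ} (k : Fin i → Fin (N + 1)) : lastIdx k ≤ N := by
  cases i with
  | zero => simp [lastIdx_zero]
  | succ n => rw [lastIdx_succ]; exact Fin.is_le _

lemma le_lastIdx {i N : ℕ} {k : Fin i → Fin (N + 1)} (hk : Monotone k) (j : Fin i) :
    (k j : ℕ) ≤ lastIdx k := by
  cases i with
  | zero => exact j.elim0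
  | succ n => rw [lastIdx_succ]; exact hk (Fin.le_last j)

lemma seqTimes_zero {i N : ℕ} (k : Fin i → Fin (N + 1)) (t δ : ℝ) :
    seqTimes k t δ 0 = t := by simp [seqTimes]

lemma seqTimes_succ {i N : ℕ} (k : Fin i → Fin (N + 1)) (t δ : ℝ) (j : Fin i) :
    seqTimes k t δ j.succ = t + ((k j : ℕ) : ℝ) * δ := by simp [seqTimes]

lemma seqTimes_last {i N : ℕ} (k : Fin i → Fin (N + 1)) (t δ : ℝ) :
    seqTimes k t δ (Fin.last i) = t + ((lastIdx k : ℕ) : ℝ) * δ := by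
  cases i with
  | zero => simp [lastIdx_zero, seqTimes_zero, Fin.last]
  | succ n => rw [← Fin.succ_last, seqTimes_succ, lastIdx_succ]

lemma seqTimes_snoc_castSucc {i N : ℕ} (k : Fin i → Fin (N + 1)) (c : Fin (N + 1))
    (t δ : ℝ) (j : Fin (i + 1)) :
    seqTimes (Fin.snoc k c) t δ j.castSucc = seqTimes k t δ j := by
  induction j using Fin.cases with
  | zero => simp [seqTimes_zero, seqTimes]
  | succ j' =>
      rw [← Fin.succ_castSucc, seqTimes_succ, seqTimes_succ, Fin.snoc_castSucc]

lemma seqTimes_snoc_last {i N : ℕ} (k : Fin i → Fin (N + 1)) (c : Fin (N + 1))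
    (t δ : ℝ) :
    seqTimes (Fin.snoc k c) t δ (Fin.last (i + 1)) = t + ((c : ℕ) : ℝ) * δ := by
  rw [← Fin.succ_last, seqTimes_succ, Fin.snoc_last]

lemma mem_gridSeq {i N : ℕ} (k : Fin i → Fin (N + 1)) :
    k ∈ gridSeq i N ↔ StrictMono k ∧ ∀ j, 1 ≤ (k j : ℕ) := by
  classical
  simp [gridSeq]


/-- extend a grid sequence by one index. -/
lemma snoc_mem_gridSeq {i N : ℕ} {k : Fin i → Fin (N + 1)} (hk : k ∈ gridSeq i N)
    {c : Fin (N + 1)} (hc : lastIdx k < (c : ℕ)) :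
    Fin.snoc k c ∈ gridSeq (i + 1) N := by
  rw [mem_gridSeq] at hk ⊢
  obtain ⟨hmono, hone⟩ := hk
  constructor
  · rw [Fin.strictMono_iff_lt_succ]
    intro j
    rcases eq_or_ne j.succ (Fin.last i) with h | h
    · rw [h, Fin.snoc_last, Fin.snoc_castSucc]
      have h1 : (k j : ℕ) ≤ lastIdx k := le_lastIdx hmono.monotone j
      exact Fin.lt_def.mpr (by omega)
    · obtain ⟨j'', hj''⟩ := Fin.exists_castSucc_eq.mpr h
      rw [← hj'', Fin.snoc_castSucc, Fin.snoc_castSucc]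
      apply hmono
      have hv : (j'' : ℕ) = (j : ℕ) + 1 := by
        have := congrArg Fin.val hj''
        simpa using this
      exact Fin.lt_def.mpr (by simp [hv])
  · intro j
    induction j using Fin.lastCases with
    | last => rw [Fin.snoc_last]; omega
    | cast j' => rw [Fin.snoc_castSucc]; exact hone j'

lemma init_mem_gridSeq {i N : ℕ} {k : Fin (i + 1) → Fin (N + 1)}
    (hk : k ∈ gridSeq (i + 1) N) : Fin.init k ∈ gridSeq i N := by
  rw [mem_gridSeq] at hk ⊢
  exact ⟨hk.1.comp Fin.strictMono_castSucc, fun j => hk.2 j.castSucc⟩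

lemma lastIdx_init_lt {i N : ℕ} {k : Fin (i + 1) → Fin (N + 1)}
    (hk : k ∈ gridSeq (i + 1) N) : lastIdx (Fin.init k) < (k (Fin.last i) : ℕ) := by
  rw [mem_gridSeq] at hk
  cases i with
  | zero => rw [lastIdx_zero]; exact hk.2 (Fin.last 0)
  | succ n =>
      rw [lastIdx_succ]
      exact hk.1 (Fin.castSucc_lt_last (Fin.last n))

lemma lindSum_zero (d : ℕ) (Q : ℝ → ℝ → Op d) (D : ℝ → Op d) (tail : ℝ → Op d)
    (t δ : ℝ) (N : ℕ) : lindSum d Q D tail t δ 0 N = tail t := by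
  classical
  have h : gridSeq 0 N = Finset.univ := by
    apply Finset.eq_univ_of_forall
    intro k
    rw [mem_gridSeq]
    exact ⟨fun a => a.elim0, fun j => j.elim0⟩
  rw [lindSum, h]
  rw [Finset.univ_unique, Finset.sum_singleton]
  simp only [List.ofFn_zero, List.prod_nil, one_mul]
  congr 1


/-- one-step Lindeberg telescoping along the grid. -/
lemma lind_step (d : ℕ) (δ : ℝ) (hδ : 0 < δ) (t : ℝ) (ht : inGrid δ t)
    (P Q : ℝ → ℝ → Op d) (D : ℝ → Op d)
    (hPCK : ∀ s u v : ℝ, s ≤ u → u ≤ v → P s u * P u v = P s v)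
    (hQCK : ∀ s u v : ℝ, inGrid δ s → inGrid δ u → inGrid δ v →
      s ≤ u → u ≤ v → Q s u * Q u v = Q s v)
    (hPid : ∀ u : ℝ, P u u = 1)
    (hQid : ∀ u : ℝ, inGrid δ u → Q u u = 1)
    (hD : ∀ s : ℝ, D s = P s (s + δ) - Q s (s + δ))
    (N a : ℕ) (ha : a ≤ N) :
    P (t + a * δ) (t + N * δ) =
      Q (t + a * δ) (t + N * δ) +
        ∑ c ∈ Finset.Ioc a N,
          Q (t + a * δ) (t + c * δ - δ) * D (t + c * δ - δ) *
            P (t + c * δ) (t + N * δ) := by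
  obtain ⟨a₀, ht0⟩ := ht
  have grid : ∀ k : ℕ, inGrid δ (t + k * δ) := fun k =>
    ⟨a₀ + k, by rw [ht0]; push_cast; ring⟩
  have mono : ∀ x y : ℕ, x ≤ y → t + (x : ℝ) * δ ≤ t + (y : ℝ) * δ := by
    intro x y h
    have := mul_le_mul_of_nonneg_right (Nat.cast_le.mpr h : (x : ℝ) ≤ (y : ℝ)) hδ.le
    linarith
  set f : ℕ → Op d := fun k => Q (t + a * δ) (t + k * δ) * P (t + k * δ) (t + N * δ)
    with hf
  have hfN : f N = Q (t + a * δ) (t + N * δ) := by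
    simp [hf, hPid]
  have hfa : f a = P (t + a * δ) (t + N * δ) := by
    simp [hf, hQid _ (grid a)]
  have hIoc : Finset.Ioc a N = Finset.Ico (a + 1) (N + 1) := by
    ext x; simp [Nat.lt_succ_iff, Nat.succ_le_iff]
  have hterm : ∀ i : ℕ, i < N - a →
      f (a + i) - f (a + i + 1) =
        Q (t + a * δ) (t + (a + 1 + i : ℕ) * δ - δ) * D (t + (a + 1 + i : ℕ) * δ - δ) *
          P (t + (a + 1 + i : ℕ) * δ) (t + N * δ) := by
    intro i hi
    set b := a + i with hb
    have hbN : b + 1 ≤ N := by omega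
    have e0 : t + ((a + 1 + i : ℕ) : ℝ) * δ - δ = t + (b : ℝ) * δ := by
      push_cast [hb]; ring
    have e1 : t + ((a + 1 + i : ℕ) : ℝ) * δ = t + ((b + 1 : ℕ) : ℝ) * δ := by
      push_cast [hb]; ring
    have e2 : t + (b : ℝ) * δ + δ = t + ((b + 1 : ℕ) : ℝ) * δ := by
      push_cast; ring
    rw [e0, e1]
    have hfb : f b = Q (t + a * δ) (t + b * δ) *
        (P (t + b * δ) (t + ((b + 1 : ℕ) : ℝ) * δ) *
          P (t + ((b + 1 : ℕ) : ℝ) * δ) (t + N * δ)) := by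
      rw [hf]
      rw [hPCK (t + b * δ) (t + ((b + 1 : ℕ) : ℝ) * δ) (t + N * δ)
        (mono b (b + 1) (by omega)) (mono (b + 1) N hbN)]
    have hfb1 : f (b + 1) = (Q (t + a * δ) (t + b * δ) *
        Q (t + b * δ) (t + ((b + 1 : ℕ) : ℝ) * δ)) *
          P (t + ((b + 1 : ℕ) : ℝ) * δ) (t + N * δ) := by
      rw [hf]
      rw [hQCK (t + a * δ) (t + b * δ) (t + ((b + 1 : ℕ) : ℝ) * δ)
        (grid a) (grid b) (grid (b + 1))
        (mono a b (by omega)) (mono b (b + 1) (by omega))]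
    rw [hfb, hfb1, hD, e2]
    simp only [mul_sub, sub_mul, mul_assoc]
  have tele : ∑ i ∈ Finset.range (N - a), (f (a + i) - f (a + i + 1)) =
      f (a + 0) - f (a + (N - a)) := by
    have := Finset.sum_range_sub' (fun i => f (a + i)) (N - a)
    simpa [add_assoc] using this
  have hsum : ∑ c ∈ Finset.Ioc a N,
      Q (t + a * δ) (t + c * δ - δ) * D (t + c * δ - δ) * P (t + c * δ) (t + N * δ)
      = ∑ i ∈ Finset.range (N - a),
        Q (t + a * δ) (t + (a + 1 + i : ℕ) * δ - δ) * D (t + (a + 1 + i : ℕ) * δ - δ) *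
          P (t + (a + 1 + i : ℕ) * δ) (t + N * δ) := by
    rw [hIoc, Finset.sum_Ico_eq_sum_range]
    have : N + 1 - (a + 1) = N - a := by omega
    rw [this]
  rw [hsum]
  have : ∑ i ∈ Finset.range (N - a),
      Q (t + a * δ) (t + (a + 1 + i : ℕ) * δ - δ) * D (t + (a + 1 + i : ℕ) * δ - δ) *
        P (t + (a + 1 + i : ℕ) * δ) (t + N * δ)
      = f (a + 0) - f (a + (N - a)) := by
    rw [← tele]
    exact (Finset.sum_congr rfl fun i hi =>
      (hterm i (Finset.mem_range.mp hi)).symm)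
  rw [this]
  have hN' : a + (N - a) = N := by omega
  rw [hN', add_zero, hfa, hfN]
  abel


lemma lind_rec (d : ℕ) (Q : ℝ → ℝ → Op d) (D : ℝ → Op d) (tailP tailQ : ℝ → Op d)
    (t δ : ℝ) (N i : ℕ)
    (hstep : ∀ a : ℕ, a ≤ N → tailP (t + a * δ) =
      tailQ (t + a * δ) + ∑ c ∈ Finset.Ioc a N,
        Q (t + a * δ) (t + c * δ - δ) * D (t + c * δ - δ) * tailP (t + c * δ)) :
    lindSum d Q D tailP t δ i N =
      lindSum d Q D tailQ t δ i N + lindSum d Q D tailP t δ (i + 1) N := by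
  classical
  set F : (Fin i → Fin (N + 1)) → Op d := fun k =>
    (List.ofFn (fun j : Fin i =>
      Q (seqTimes k t δ j.castSucc) (seqTimes k t δ j.succ - δ) *
        D (seqTimes k t δ j.succ - δ))).prod with hF
  have expand : ∀ k ∈ gridSeq i N,
      F k * tailP (seqTimes k t δ (Fin.last i)) =
        F k * tailQ (seqTimes k t δ (Fin.last i)) +
          ∑ c ∈ Finset.Ioc (lastIdx k) N,
            F k * (Q (t + (lastIdx k : ℝ) * δ) (t + c * δ - δ) * D (t + c * δ - δ) *
              tailP (t + c * δ)) := by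
    intro k _
    rw [seqTimes_last, hstep (lastIdx k) (lastIdx_le k), mul_add, Finset.mul_sum]
  have split : lindSum d Q D tailP t δ i N =
      lindSum d Q D tailQ t δ i N +
        ∑ k ∈ gridSeq i N, ∑ c ∈ Finset.Ioc (lastIdx k) N,
          F k * (Q (t + (lastIdx k : ℝ) * δ) (t + c * δ - δ) * D (t + c * δ - δ) *
            tailP (t + c * δ)) := by
    rw [lindSum, lindSum, Finset.sum_congr rfl expand, Finset.sum_add_distrib]
  rw [split]
  congr 1
  -- now identify the double sum with `lindSum` at level `i + 1`
  rw [← Finset.sum_sigma (gridSeq i N) (fun k => Finset.Ioc (lastIdx k) N)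
    (fun p => F p.1 * (Q (t + (lastIdx p.1 : ℝ) * δ) (t + p.2 * δ - δ) *
      D (t + p.2 * δ - δ) * tailP (t + p.2 * δ))), lindSum]
  refine Finset.sum_nbij'
    (fun p => Fin.snoc p.1 (⟨p.2 % (N + 1), Nat.mod_lt _ (Nat.succ_pos N)⟩ : Fin (N + 1)))
    (fun k' => ⟨Fin.init k', (k' (Fin.last i) : ℕ)⟩) ?_ ?_ ?_ ?_ ?_
  · rintro ⟨k, c⟩ hp
    simp only [Finset.mem_sigma, Finset.mem_Ioc] at hp
    have hcm : c % (N + 1) = c := Nat.mod_eq_of_lt (by omega)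
    exact snoc_mem_gridSeq hp.1 (by simpa [hcm] using hp.2.1)
  · intro k' hk'
    simp only [Finset.mem_sigma, Finset.mem_Ioc]
    exact ⟨init_mem_gridSeq hk', lastIdx_init_lt hk', Fin.is_le _⟩
  · rintro ⟨k, c⟩ hp
    simp only [Finset.mem_sigma, Finset.mem_Ioc] at hp
    have hcm : c % (N + 1) = c := Nat.mod_eq_of_lt (by omega)
    simp [Fin.init_snoc, Fin.snoc_last, hcm]
  · intro k' hk'
    have : (⟨(k' (Fin.last i) : ℕ) % (N + 1), Nat.mod_lt _ (Nat.succ_pos N)⟩ : Fin (N + 1))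
        = k' (Fin.last i) := by
      apply Fin.ext
      exact Nat.mod_eq_of_lt (k' (Fin.last i)).isLt
    dsimp only
    rw [this, Fin.snoc_init_self]
  · rintro ⟨k, c⟩ hp
    simp only [Finset.mem_sigma, Finset.mem_Ioc] at hp
    have hcm : c % (N + 1) = c := Nat.mod_eq_of_lt (by omega)
    set c' : Fin (N + 1) := ⟨c % (N + 1), Nat.mod_lt _ (Nat.succ_pos N)⟩ with hc'
    have hc'v : ((c' : ℕ) : ℝ) = (c : ℝ) := by rw [hc']; simp [hcm]
    -- compute the list product for the extended sequence
    rw [List.ofFn_succ', List.prod_concat]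
    have hlist : (List.ofFn fun j : Fin i =>
        Q (seqTimes (Fin.snoc k c') t δ j.castSucc.castSucc)
            (seqTimes (Fin.snoc k c') t δ j.castSucc.succ - δ) *
          D (seqTimes (Fin.snoc k c') t δ j.castSucc.succ - δ)) =
        List.ofFn fun j : Fin i =>
          Q (seqTimes k t δ j.castSucc) (seqTimes k t δ j.succ - δ) *
            D (seqTimes k t δ j.succ - δ) := by
      refine congrArg List.ofFn (funext fun j => ?_)
      rw [Fin.succ_castSucc, seqTimes_snoc_castSucc, seqTimes_snoc_castSucc]
    have hlastfac :
        Q (seqTimes (Fin.snoc k c') t δ (Fin.last i).castSucc)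
            (seqTimes (Fin.snoc k c') t δ (Fin.last i).succ - δ) *
          D (seqTimes (Fin.snoc k c') t δ (Fin.last i).succ - δ) =
        Q (t + (lastIdx k : ℝ) * δ) (t + (c : ℝ) * δ - δ) * D (t + (c : ℝ) * δ - δ) := by
      rw [seqTimes_snoc_castSucc, seqTimes_last, Fin.succ_last, seqTimes_snoc_last, hc'v]
    have htail : tailP (seqTimes (Fin.snoc k c') t δ (Fin.last (i + 1))) =
        tailP (t + (c : ℝ) * δ) := by
      rw [seqTimes_snoc_last, hc'v]
    rw [hlist, hlastfac, htail, hF]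
    simp only [mul_assoc]


end Stmt6Aux

/-- Iterated Lindeberg decomposition:
`P_{t,t+S} = Q_{t,t+S} + Σ_{i=1}^{m−1} I_i + R_m`. -/
theorem stmt6 (d : ℕ) (hd : 0 < d) (δ : ℝ) (hδ : 0 < δ) (N : ℕ) (hN : 1 ≤ N)
    (S : ℝ) (hS : S = N * δ) (t : ℝ) (ht : inGrid δ t)
    (P Q : ℝ → ℝ → Op d)
    (hPCK : ∀ s u v : ℝ, s ≤ u → u ≤ v → P s u * P u v = P s v)
    (hQCK : ∀ s u v : ℝ, inGrid δ s → inGrid δ u → inGrid δ v →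
      s ≤ u → u ≤ v → Q s u * Q u v = Q s v)
    (hPid : ∀ u : ℝ, P u u = 1)
    (hQid : ∀ u : ℝ, inGrid δ u → Q u u = 1) :
    ∀ m : ℕ, 1 ≤ m →
      P t (t + S) =
        Q t (t + S) +
          (∑ i ∈ Finset.Icc 1 (m - 1),
            lindSum d Q (fun s => P s (s + δ) - Q s (s + δ))
              (fun s => Q s (t + S)) t δ i N) +
          lindSum d Q (fun s => P s (s + δ) - Q s (s + δ))
            (fun s => P s (t + S)) t δ m N := by
  set D : ℝ → Op d := fun s => P s (s + δ) - Q s (s + δ) with hD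
  have htS : t + S = t + (N : ℝ) * δ := by rw [hS]
  have hstep : ∀ a : ℕ, a ≤ N →
      (fun s => P s (t + S)) (t + (a : ℝ) * δ) =
        (fun s => Q s (t + S)) (t + (a : ℝ) * δ) + ∑ c ∈ Finset.Ioc a N,
          Q (t + (a : ℝ) * δ) (t + (c : ℝ) * δ - δ) * D (t + (c : ℝ) * δ - δ) *
            (fun s => P s (t + S)) (t + (c : ℝ) * δ) := by
    intro a ha
    simp only
    rw [htS]
    exact Stmt6Aux.lind_step d δ hδ t ht P Q D hPCK hQCK hPid hQid
      (fun s => rfl) N a ha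
  have hrec : ∀ i : ℕ,
      lindSum d Q D (fun s => P s (t + S)) t δ i N =
        lindSum d Q D (fun s => Q s (t + S)) t δ i N +
          lindSum d Q D (fun s => P s (t + S)) t δ (i + 1) N :=
    fun i => Stmt6Aux.lind_rec d Q D _ _ t δ N i hstep
  have hA0 : lindSum d Q D (fun s => P s (t + S)) t δ 0 N = P t (t + S) :=
    Stmt6Aux.lindSum_zero d Q D _ t δ N
  have hB0 : lindSum d Q D (fun s => Q s (t + S)) t δ 0 N = Q t (t + S) :=
    Stmt6Aux.lindSum_zero d Q D _ t δ N
  intro m hm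
  induction m with
  | zero => exact absurd hm (by omega)
  | succ n ih =>
      cases n with
      | zero =>
          have h0 := hrec 0
          rw [hA0, hB0] at h0
          rw [show (1 : ℕ) - 1 = 0 from rfl, Finset.Icc_eq_empty (by omega),
            Finset.sum_empty, add_zero]
          exact h0
      | succ n' =>
          have ihh := ih (by omega)
          rw [show n' + 1 + 1 - 1 = n' + 1 from rfl,
            Finset.sum_Icc_succ_top (by omega : (1:ℕ) ≤ n' + 1)]
          rw [ihh, hrec (n' + 1)]
          simp only [Nat.add_sub_cancel, ← add_assoc]
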